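/- Let n ≥ 3 and define u(x) = ln|ln|x|| and f(x) = (n-2)/(|x|² ln|x|) − 1/(|x|² ln²|x|) on the punctured ball B_{e^{-1}} \ {0} in ℝⁿ. Then Δu = f on B_{e^{-1}} \ {0}. -/

import Mathlib

open MeasureTheory

/-- The Laplacian: sum of second partial derivatives. -/
noncomputable def lap {n : ℕ} (u : EuclideanSpace ℝ (Fin n) → ℝ)
    (x : EuclideanSpace ℝ (Fin n)) : ℝ :=
  ∑ i : Fin n, fderiv ℝ (fun y => fderiv ℝ u y (EuclideanSpace.single i 1)) x
    (EuclideanSpace.single i 1)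

open scoped RealInnerProductSpace

namespace Stmt0Aux

variable {n : ℕ}

noncomputable def Q (y : EuclideanSpace ℝ (Fin n)) : ℝ := @inner ℝ _ _ y y

lemma Q_eq (y : EuclideanSpace ℝ (Fin n)) : Q y = ‖y‖ ^ 2 :=
  real_inner_self_eq_norm_sq y

lemma hasFDerivAt_Q (x : EuclideanSpace ℝ (Fin n)) :
    HasFDerivAt (Q (n := n)) ((2 : ℝ) • innerSL ℝ x) x := by
  have h := (hasFDerivAt_id (𝕜 := ℝ) x).inner (𝕜 := ℝ) (hasFDerivAt_id x)
  refine h.congr_fderiv ?_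
  ext w
  simp [real_inner_comm, two_smul]

lemma Q_pos {x : EuclideanSpace ℝ (Fin n)} (hx : 0 < ‖x‖) : 0 < Q x := by
  rw [Q_eq]; positivity

lemma Q_lt_one {x : EuclideanSpace ℝ (Fin n)} (hx : ‖x‖ < 1) : Q x < 1 := by
  rw [Q_eq]
  nlinarith [norm_nonneg x]

lemma hasFDerivAt_u (x : EuclideanSpace ℝ (Fin n)) (hx0 : 0 < ‖x‖) (hx1 : ‖x‖ < 1) :
    HasFDerivAt (fun y : EuclideanSpace ℝ (Fin n) => Real.log |Real.log ‖y‖|)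
      ((2 / (Q x * Real.log (Q x))) • innerSL ℝ x) x := by
  set t := Q x with ht
  have h0t : 0 < t := Q_pos hx0
  have ht1 : t < 1 := Q_lt_one hx1
  have hL : Real.log t < 0 := Real.log_neg h0t ht1
  have hLne : -(1/2 : ℝ) * Real.log t ≠ 0 :=
    (mul_pos_of_neg_of_neg (by norm_num) hL).ne'
  have hlog : HasDerivAt Real.log t⁻¹ t := Real.hasDerivAt_log h0t.ne'
  have hmul : HasDerivAt (fun s : ℝ => -(1/2 : ℝ) * Real.log s) (-(1/2 : ℝ) * t⁻¹) t :=
    hlog.const_mul _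
  have houter : HasDerivAt (fun s : ℝ => Real.log (-(1/2 : ℝ) * Real.log s))
      ((-(1/2 : ℝ) * t⁻¹) / (-(1/2 : ℝ) * Real.log t)) t := hmul.log hLne
  have hv : HasFDerivAt (fun y : EuclideanSpace ℝ (Fin n) =>
      Real.log (-(1/2 : ℝ) * Real.log (Q y)))
      (((-(1/2 : ℝ) * t⁻¹) / (-(1/2 : ℝ) * Real.log t)) • ((2 : ℝ) • innerSL ℝ x)) x :=
    by exact houter.comp_hasFDerivAt x (hasFDerivAt_Q x)
  have hscal : ((-(1/2 : ℝ) * t⁻¹) / (-(1/2 : ℝ) * Real.log t)) • ((2 : ℝ) • innerSL ℝ x)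
      = (2 / (t * Real.log t)) • innerSL ℝ x := by
    rw [smul_smul]
    congr 1
    field_simp
  rw [hscal] at hv
  apply hv.congr_of_eventuallyEq
  have hopen : IsOpen {y : EuclideanSpace ℝ (Fin n) | 0 < ‖y‖ ∧ ‖y‖ < 1} :=
    (isOpen_lt continuous_const continuous_norm).inter
      (isOpen_lt continuous_norm continuous_const)
  refine Filter.eventuallyEq_of_mem (hopen.mem_nhds ⟨hx0, hx1⟩) ?_
  intro y hy
  have hy0 : 0 < ‖y‖ := hy.1
  have hy1 : ‖y‖ < 1 := hy.2
  have hlogy : Real.log ‖y‖ < 0 := Real.log_neg hy0 hy1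
  have : Real.log (Q y) = 2 * Real.log ‖y‖ := by
    rw [Q_eq, Real.log_pow]; push_cast; ring
  simp only [this]
  rw [abs_of_neg hlogy]
  congr 1
  ring

lemma fderiv_u_apply (y : EuclideanSpace ℝ (Fin n)) (h0 : 0 < ‖y‖) (h1 : ‖y‖ < 1)
    (i : Fin n) :
    fderiv ℝ (fun z : EuclideanSpace ℝ (Fin n) => Real.log |Real.log ‖z‖|) y
        (EuclideanSpace.single i 1)
      = 2 * y i * (Q y * Real.log (Q y))⁻¹ := by
  rw [(hasFDerivAt_u y h0 h1).fderiv]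
  simp [EuclideanSpace.inner_single_right]
  rw [div_eq_mul_inv]
  ring

end Stmt0Aux

open Stmt0Aux in
theorem stmt_0 (n : ℕ) (hn : 3 ≤ n) :
    ∀ x : EuclideanSpace ℝ (Fin n), 0 < ‖x‖ → ‖x‖ < Real.exp (-1) →
      lap (fun y => Real.log |Real.log ‖y‖|) x
        = ((n : ℝ) - 2) / (‖x‖ ^ 2 * Real.log ‖x‖)
            - 1 / (‖x‖ ^ 2 * (Real.log ‖x‖) ^ 2) := by
  intro x hx0 hx1
  have hexp1 : Real.exp (-1) < 1 :=
    (Real.exp_lt_exp.mpr (by norm_num)).trans_eq Real.exp_zero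
  have hx1' : ‖x‖ < 1 := hx1.trans hexp1
  set t := Q x with htdef
  set L := Real.log t with hLdef
  have h0t : 0 < t := Q_pos hx0
  have ht1 : t < 1 := Q_lt_one hx1'
  have hLneg : L < 0 := Real.log_neg h0t ht1
  have hDne : t * L ≠ 0 := (mul_neg_of_pos_of_neg h0t hLneg).ne
  -- second derivatives
  have hsec : ∀ i : Fin n,
      fderiv ℝ (fun y => fderiv ℝ
          (fun z : EuclideanSpace ℝ (Fin n) => Real.log |Real.log ‖z‖|) y
          (EuclideanSpace.single i 1)) x (EuclideanSpace.single i 1)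
        = 2 * (t * L)⁻¹ + (-(4 : ℝ) * (L + 1) * ((t * L) ^ 2)⁻¹) * (x i) ^ 2 := by
    intro i
    have hopen : IsOpen {y : EuclideanSpace ℝ (Fin n) | 0 < ‖y‖ ∧ ‖y‖ < 1} :=
      (isOpen_lt continuous_const continuous_norm).inter
        (isOpen_lt continuous_norm continuous_const)
    have heq : (fun y => fderiv ℝ
        (fun z : EuclideanSpace ℝ (Fin n) => Real.log |Real.log ‖z‖|) y
        (EuclideanSpace.single i 1))
        =ᶠ[nhds x] fun y => 2 * y i * (Q y * Real.log (Q y))⁻¹ :=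
      Filter.eventuallyEq_of_mem (hopen.mem_nhds ⟨hx0, hx1'⟩)
        (fun y hy => fderiv_u_apply y hy.1 hy.2 i)
    rw [heq.fderiv_eq]
    -- derivative of the denominator
    have hden' : HasDerivAt (fun s : ℝ => s * Real.log s) (L + 1) t := by
      have h := (hasDerivAt_id t).mul (Real.hasDerivAt_log h0t.ne')
      refine h.congr_deriv ?_
      simp [hLdef, h0t.ne']
    have hden : HasFDerivAt (fun y : EuclideanSpace ℝ (Fin n) => Q y * Real.log (Q y))
        ((L + 1) • ((2 : ℝ) • innerSL ℝ x)) x :=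
      by exact hden'.comp_hasFDerivAt x (hasFDerivAt_Q x)
    have hinv : HasFDerivAt
        (fun y : EuclideanSpace ℝ (Fin n) => (Q y * Real.log (Q y))⁻¹)
        ((-(((t * L)) ^ 2)⁻¹) • ((L + 1) • ((2 : ℝ) • innerSL ℝ x))) x :=
      (hasDerivAt_inv hDne).comp_hasFDerivAt x hden
    have hnum : HasFDerivAt (fun y : EuclideanSpace ℝ (Fin n) => 2 * y i)
        ((2 : ℝ) • (EuclideanSpace.proj i : EuclideanSpace ℝ (Fin n) →L[ℝ] ℝ)) x :=
      ((EuclideanSpace.proj i : EuclideanSpace ℝ (Fin n) →L[ℝ] ℝ).hasFDerivAt).const_mul 2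
    have hG : HasFDerivAt (fun y : EuclideanSpace ℝ (Fin n) => 2 * y i * (Q y * Real.log (Q y))⁻¹) _ x := hnum.mul hinv
    rw [hG.fderiv]
    simp [EuclideanSpace.inner_single_right, EuclideanSpace.single_apply]
    all_goals ring
  -- sum up
  show (∑ i : Fin n, fderiv ℝ (fun y => fderiv ℝ
      (fun z : EuclideanSpace ℝ (Fin n) => Real.log |Real.log ‖z‖|) y
      (EuclideanSpace.single i 1)) x (EuclideanSpace.single i 1)) = _
  rw [Finset.sum_congr rfl (fun i _ => hsec i)]
  have hsum : ∑ i : Fin n, (x i) ^ 2 = t := by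
    rw [htdef]
    simp [Q, PiLp.inner_apply, RCLike.inner_apply, sq]
    rw [EuclideanSpace.norm_eq, ← sq, Real.sq_sqrt (by positivity)]
    simp [sq]
  rw [Finset.sum_add_distrib, Finset.sum_const, ← Finset.mul_sum, hsum,
    Finset.card_univ, Fintype.card_fin, nsmul_eq_mul]
  -- final algebra
  have hr0 : ‖x‖ ≠ 0 := hx0.ne'
  have hlogr : Real.log ‖x‖ < 0 := Real.log_neg hx0 hx1'
  have hlogrne : Real.log ‖x‖ ≠ 0 := hlogr.ne
  have htL : t = ‖x‖ ^ 2 := Q_eq x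
  have hLval : L = 2 * Real.log ‖x‖ := by
    rw [hLdef, htL, Real.log_pow]; push_cast; ring
  rw [htL, hLval]
  field_simp
  ring
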